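/- Let r, α, β, γ, μ, τ, ω, θ, σ > 0 with ω > τ and γ(μα − β) > 0, let p, q ≥ 0, let z be real with 0 < |z| ≤ 1, and assume r² < [Γ(θk+σ)]^{γα} for every integer k ≥ 1. Then, for ν = 1, the (p,q)-Mathieu-type series with the sequence a_k = [Γ(θk+σ)]^γ satisfies S_{μ,1,τ,ω}^{(α,β)}(r; {[Γ(θk+σ)]^γ}; p,q; z) = (2zτ/ω) Σ_{m=0}^∞ ((μ)_m/m!) (−r²)^m E_{γ((μ+m)α−β), θ, σ+θ; p,q}^{(1, τ+1, ω+1)}(z). -/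

import Mathlib

open Real MeasureTheory Set Filter

/-- Pochhammer symbol `(a)_n = Γ(a+n)/Γ(a)`. -/
noncomputable def poch (a : ℝ) (n : ℕ) : ℝ := Real.Gamma (a + n) / Real.Gamma a

/-- Euler beta function. -/
noncomputable def betaE (x y : ℝ) : ℝ := Real.Gamma x * Real.Gamma y / Real.Gamma (x + y)

/-- Extended beta function `B_{p,q}(x,y)`. -/
noncomputable def betaPQ (p q x y : ℝ) : ℝ :=
  ∫ t in Ioo (0:ℝ) 1, t ^ (x - 1) * (1 - t) ^ (y - 1) * Real.exp (-p / t - q / (1 - t))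

/-- The `(p,q)`-Mittag-Leffler function `E_{δ,θ,σ;p,q}^{(lam,τ,ω)}(z)`. -/
noncomputable def mlPQ (δ θ σ lam τ ω p q z : ℝ) : ℝ :=
  ∑' k : ℕ, poch lam k * betaPQ p q (τ + (k : ℝ)) (ω - τ) * z ^ k /
    (Real.Gamma (θ * (k : ℝ) + σ) ^ δ * betaE τ (ω - τ) * (Nat.factorial k : ℝ))

/-- The `(p,q)`-Mathieu-type power series attached to the sequence `a`. -/
noncomputable def mathieuPQ (μ ν τ ω α β r p q z : ℝ) (a : ℕ → ℝ) : ℝ :=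
  ∑' n : ℕ, 2 * a (n + 1) ^ β * poch ν (n + 1) *
      betaPQ p q (τ + ((n : ℝ) + 1)) (ω - τ) * z ^ (n + 1) /
    ((Nat.factorial (n + 1) : ℝ) * betaE τ (ω - τ) * (a (n + 1) ^ α + r ^ 2) ^ μ)

section AuxLemmas

open Topology

lemma poch_pos {a : ℝ} (ha : 0 < a) (n : ℕ) : 0 < poch a n :=
  div_pos (Real.Gamma_pos_of_pos (by positivity)) (Real.Gamma_pos_of_pos ha)


lemma poch_zero {a : ℝ} (ha : 0 < a) : poch a 0 = 1 := by
  simp [poch, div_self (Real.Gamma_pos_of_pos ha).ne']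


lemma poch_succ {a : ℝ} (ha : 0 < a) (n : ℕ) :
    poch a (n + 1) = (a + n) * poch a n := by
  have h : a + ((n : ℝ) + 1) = (a + n) + 1 := by ring
  have h0 : a + (n : ℝ) ≠ 0 := by positivity
  simp only [poch, Nat.cast_add, Nat.cast_one]
  rw [h, Real.Gamma_add_one h0, mul_div_assoc]


lemma poch_one (k : ℕ) : poch 1 k = (Nat.factorial k : ℝ) := by
  rw [poch, Real.Gamma_one, add_comm, Real.Gamma_nat_eq_factorial, div_one]

set_option maxHeartbeats 1000000 in
lemma binomial_hasSum {μ x : ℝ} (hμ : 0 < μ) (hx : |x| < 1) :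
    HasSum (fun m : ℕ => poch μ m / (Nat.factorial m : ℝ) * x ^ m) ((1 - x) ^ (-μ)) := by
  set c : ℕ → ℝ := fun m => poch μ m / (Nat.factorial m : ℝ) with hc
  have hcpos : ∀ m, 0 < c m := fun m =>
    div_pos (poch_pos hμ m) (by exact_mod_cast Nat.cast_pos.mpr (Nat.factorial_pos m))
  have hc0 : c 0 = 1 := by simp [hc, poch_zero hμ]
  have hcrec : ∀ m : ℕ, c (m + 1) = c m * ((μ + m) / (m + 1)) := by
    intro m
    have hfac : ((Nat.factorial (m+1) : ℕ) : ℝ) = ((m:ℝ)+1) * (Nat.factorial m : ℝ) := by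
      push_cast [Nat.factorial_succ]; ring
    have hf0 : (Nat.factorial m : ℝ) ≠ 0 := by
      exact_mod_cast (Nat.factorial_pos m).ne'
    have hn1 : ((m:ℝ)+1) ≠ 0 := by positivity
    simp only [hc]
    rw [poch_succ hμ, hfac]
    field_simp
  set b' : ℝ := (|x| + 1) / 2 with hb'
  have hb'0 : 0 < b' := by positivity
  have hb'1 : b' < 1 := by rw [hb']; linarith
  have hxb' : |x| < b' := by rw [hb']; linarith [abs_nonneg x]
  set u : ℕ → ℝ := fun m => c m * (m + 1) * b' ^ m / b' with hu
  have hupos : ∀ m, 0 < u m := by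
    intro m
    apply div_pos _ hb'0
    have := hcpos m
    positivity
  have husum : Summable u := by
    apply summable_of_ratio_test_tendsto_lt_one hb'1
      (Eventually.of_forall fun n => (hupos n).ne')
    have heq : ∀ n : ℕ, ‖u (n+1)‖ / ‖u n‖ =
        ((μ - 1) * (1 / ((n:ℝ)+1)) + 1) * (1 * (1 / ((n:ℝ)+1)) + 1) * b' := by
      intro n
      rw [Real.norm_eq_abs, Real.norm_eq_abs, abs_of_pos (hupos _), abs_of_pos (hupos _)]
      have hcn : c n ≠ 0 := (hcpos n).ne'
      have hn1 : ((n:ℝ)+1) ≠ 0 := by positivity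
      simp only [hu]
      rw [hcrec]
      push_cast
      field_simp
      ring
    rw [show (𝓝 b') = 𝓝 (((μ-1) * 0 + 1) * (1 * 0 + 1) * b') by norm_num]
    exact Tendsto.congr (fun n => (heq n).symm)
      ((((tendsto_one_div_add_atTop_nhds_zero_nat.const_mul (μ-1)).add_const 1).mul
        ((tendsto_one_div_add_atTop_nhds_zero_nat.const_mul 1).add_const 1)).mul_const b')
  have hbound : ∀ (m : ℕ) (y : ℝ), |y| ≤ b' → ‖c m * ((m:ℝ) * y ^ (m-1))‖ ≤ u m := by
    intro m y hy
    rw [Real.norm_eq_abs, abs_mul, abs_of_pos (hcpos m), abs_mul, Nat.abs_cast, abs_pow]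
    cases m with
    | zero => simp; positivity
    | succ k =>
      have h1 : |y| ^ (k + 1 - 1) ≤ b' ^ k := by
        simpa using pow_le_pow_left₀ (abs_nonneg y) hy k
      have h2 : u (k+1) = c (k+1) * ((k:ℝ)+2) * b' ^ k := by
        simp only [hu]
        rw [pow_succ]
        push_cast
        field_simp
        ring
      rw [h2]
      push_cast
      have hck := hcpos (k+1)
      have hbk : (0:ℝ) ≤ b' ^ k := by positivity
      have h3 : ((k:ℝ)+1) * |y| ^ (k+1-1) ≤ ((k:ℝ)+2) * b' ^ k := by
        calc ((k:ℝ)+1) * |y| ^ (k+1-1) ≤ ((k:ℝ)+1) * b' ^ k := by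
              have : (0:ℝ) ≤ (k:ℝ)+1 := by positivity
              nlinarith
          _ ≤ ((k:ℝ)+2) * b' ^ k := by nlinarith
      calc c (k+1) * (((k:ℝ)+1) * |y| ^ (k+1-1)) ≤ c (k+1) * (((k:ℝ)+2) * b' ^ k) := by nlinarith
        _ = c (k+1) * ((k:ℝ)+2) * b' ^ k := by ring
  have hgsum : ∀ y : ℝ, |y| ≤ b' → Summable (fun m => c m * y ^ m) := by
    intro y hy
    apply Summable.of_abs
    apply husum.of_nonneg_of_le (fun m => abs_nonneg _)
    intro m
    rw [abs_mul, abs_of_pos (hcpos m), abs_pow]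
    have h1 : c m * |y| ^ m ≤ c m * b' ^ m := by
      have h0 := (hcpos m).le
      exact mul_le_mul_of_nonneg_left (pow_le_pow_left₀ (abs_nonneg y) hy m) h0
    have h2 : c m * b' ^ m ≤ u m := by
      simp only [hu]
      rw [le_div_iff₀ hb'0]
      have h3 := hcpos m
      have h4 : (0:ℝ) < b' ^ m := by positivity
      have h5 : (0:ℝ) ≤ (m:ℝ) := Nat.cast_nonneg m
      have h6 : c m * b' ^ m * b' ≤ c m * b' ^ m := mul_le_of_le_one_right (le_of_lt (mul_pos h3 h4)) hb'1.le
      have h7 : c m * b' ^ m ≤ c m * ((m:ℝ) + 1) * b' ^ m := by nlinarith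
      linarith
    linarith
  have hS : ∀ y : ℝ, |y| ≤ b' → Summable (fun m => c m * ((m:ℝ) * y ^ (m-1))) := by
    intro y hy
    apply Summable.of_abs
    exact husum.of_nonneg_of_le (fun m => abs_nonneg _) (fun m => hbound m y hy)
  set t : Set ℝ := Ioo (-b') b' with ht
  have hmem0 : (0:ℝ) ∈ t := ⟨by linarith, hb'0⟩
  have hmemx : x ∈ t := by
    obtain ⟨h1, h2⟩ := abs_lt.mp hxb'
    exact ⟨h1, h2⟩
  have habs : ∀ y ∈ t, |y| ≤ b' := by
    intro y hy
    exact (abs_lt.mpr ⟨hy.1, hy.2⟩).le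
  have hderiv : ∀ y ∈ t, HasDerivAt (fun z => ∑' m, c m * z ^ m)
      (∑' m, c m * ((m:ℝ) * y ^ (m-1))) y := by
    intro y hy
    exact hasDerivAt_tsum_of_isPreconnected (u := u)
      (g := fun m z => c m * z ^ m) (g' := fun m z => c m * ((m:ℝ) * z ^ (m-1)))
      husum isOpen_Ioo (convex_Ioo _ _).isPreconnected
      (fun m z _ => (hasDerivAt_pow m z).const_mul (c m))
      (fun m z hz => hbound m z (habs z hz)) hmem0
      (hgsum 0 (by simpa using hb'0.le)) hy
  have hkey : ∀ y ∈ t, (1 - y) * (∑' m, c m * ((m:ℝ) * y ^ (m-1)))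
      = μ * (∑' m, c m * y ^ m) := by
    intro y hy
    have hy' := habs y hy
    have h2 : ∀ m : ℕ, c (m+1) * (((m:ℝ)+1) * y ^ m) =
        μ * (c m * y ^ m) + y * (c m * ((m:ℝ) * y ^ (m-1))) := by
      intro m
      rw [hcrec]
      cases m with
      | zero => push_cast; simp; ring
      | succ k =>
        have hk : ((k:ℝ)+1+1) ≠ 0 := by positivity
        push_cast
        field_simp
        ring
    have h3 : (∑' m, c m * ((m:ℝ) * y ^ (m-1)))
        = μ * (∑' m, c m * y ^ m) + y * (∑' m, c m * ((m:ℝ) * y ^ (m-1))) := by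
      calc (∑' m, c m * ((m:ℝ) * y ^ (m-1)))
          = c 0 * (((0:ℕ):ℝ) * y ^ (0-1)) + ∑' m, c (m+1) * (((m+1:ℕ):ℝ) * y ^ (m+1-1)) := by
            exact Summable.tsum_eq_zero_add (hS y hy')
        _ = ∑' m, c (m+1) * (((m:ℝ)+1) * y ^ m) := by
            push_cast
            simp
        _ = ∑' m, (μ * (c m * y ^ m) + y * (c m * ((m:ℝ) * y ^ (m-1)))) := tsum_congr h2
        _ = μ * (∑' m, c m * y ^ m) + y * (∑' m, c m * ((m:ℝ) * y ^ (m-1))) := by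
            rw [Summable.tsum_add ((hgsum y hy').mul_left μ) ((hS y hy').mul_left y),
              tsum_mul_left, tsum_mul_left]
    linarith [h3]
  have hhd : ∀ y ∈ t, HasDerivAt (fun z => (∑' m, c m * z ^ m) * (1 - z) ^ μ) 0 y := by
    intro y hy
    have h1y : (0:ℝ) < 1 - y := by
      have h2 : y < b' := hy.2
      linarith
    have hB : HasDerivAt (fun z : ℝ => (1 - z) ^ μ) (μ * (1-y)^(μ-1) * (-1)) y := by
      have hb : HasDerivAt (fun z : ℝ => 1 - z) (-1) y := (hasDerivAt_id y).const_sub 1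
      have := (Real.hasDerivAt_rpow_const (x := 1 - y) (p := μ) (Or.inl h1y.ne')).comp y hb
      simpa [Function.comp_def] using this
    have hAB := (hderiv y hy).mul hB
    have hpow : (1-y) ^ μ = (1-y) ^ (μ-1) * (1-y) := by
      rw [← Real.rpow_add_one h1y.ne']; ring_nf
    have hz : (∑' m, c m * ((m:ℝ) * y ^ (m-1))) * (1 - y) ^ μ
        + (∑' m, c m * y ^ m) * (μ * (1-y)^(μ-1) * (-1)) = 0 := by
      have hk := hkey y hy
      calc (∑' m, c m * ((m:ℝ) * y ^ (m-1))) * (1 - y) ^ μ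
          + (∑' m, c m * y ^ m) * (μ * (1-y)^(μ-1) * (-1))
          = ((1-y) * (∑' m, c m * ((m:ℝ) * y ^ (m-1)))
              - μ * (∑' m, c m * y ^ m)) * (1-y)^(μ-1) := by rw [hpow]; ring
        _ = 0 := by rw [hk]; ring
    rw [← hz]
    exact hAB
  have hconst : (∑' m, c m * x ^ m) * (1 - x) ^ μ
      = (∑' m, c m * (0:ℝ) ^ m) * (1 - 0) ^ μ := by
    have hdiff : DifferentiableOn ℝ (fun z => (∑' m, c m * z ^ m) * (1 - z) ^ μ) t := fun y hy =>
      ((hhd y hy).differentiableAt).differentiableWithinAt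
    have hfz : ∀ y ∈ t, fderivWithin ℝ (fun z => (∑' m, c m * z ^ m) * (1 - z) ^ μ) t y = 0 := by
      intro y hy
      have h0 : (ContinuousLinearMap.toSpanSingleton ℝ (0:ℝ)) = 0 := by
        ext; simp
      rw [fderivWithin_of_isOpen isOpen_Ioo hy, (hhd y hy).hasFDerivAt.fderiv, h0]
    exact (convex_Ioo _ _).is_const_of_fderivWithin_eq_zero hdiff hfz hmemx hmem0
  have hx1 : (0:ℝ) < 1 - x := by
    have := (abs_lt.mp hx).2; linarith
  have hg0 : (∑' m, c m * (0:ℝ) ^ m) = 1 := by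
    rw [tsum_eq_single 0 (fun m hm => by simp [zero_pow hm])]
    simp [hc0]
  have hgx : (∑' m, c m * x ^ m) = (1 - x) ^ (-μ) := by
    have hx' : (∑' m, c m * x ^ m) * (1-x) ^ μ = 1 := by
      rw [hconst, hg0]
      simp
    have hμpos : (0:ℝ) < (1-x) ^ μ := Real.rpow_pos_of_pos hx1 μ
    rw [Real.rpow_neg hx1.le]
    field_simp
    linarith [hx']
  have hfin := (hgsum x hxb'.le).hasSum
  rwa [hgx] at hfin


lemma gamma_ratio {θ x : ℝ} (hθ : 0 < θ) (hx : 2 ≤ x) :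
    Real.Gamma x * (x - 1) ^ θ ≤ Real.Gamma (x + θ) := by
  have hx1 : (0:ℝ) < x - 1 := by linarith
  have hx0 : (0:ℝ) < x := by linarith
  have hxθ : (0:ℝ) < x + θ := by linarith
  have hslope := Real.convexOn_log_Gamma.slope_mono_adjacent
    (x := x - 1) (y := x) (z := x + θ)
    (mem_Ioi.mpr hx1) (mem_Ioi.mpr hxθ) (by linarith) (by linarith)
  have hG : Real.Gamma x = (x - 1) * Real.Gamma (x - 1) := by
    have := Real.Gamma_add_one (s := x - 1) hx1.ne'
    rw [show x - 1 + 1 = x by ring] at this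
    exact this
  have hGx1 : 0 < Real.Gamma (x - 1) := Real.Gamma_pos_of_pos hx1
  have hGx : 0 < Real.Gamma x := Real.Gamma_pos_of_pos hx0
  have hGxθ : 0 < Real.Gamma (x + θ) := Real.Gamma_pos_of_pos hxθ
  simp only [Function.comp] at hslope
  rw [show x - (x - 1) = 1 by ring, show x + θ - x = θ by ring, div_one] at hslope
  have hlog : Real.log (Real.Gamma x) - Real.log (Real.Gamma (x-1)) = Real.log (x - 1) := by
    rw [hG, Real.log_mul hx1.ne' hGx1.ne']
    ring
  rw [hlog] at hslope
  have h2 : Real.log (Real.Gamma x) + θ * Real.log (x - 1) ≤ Real.log (Real.Gamma (x + θ)) := by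
    have hθ' := hθ
    rw [le_div_iff₀ hθ] at hslope
    linarith
  have h3 : Real.Gamma x * (x-1) ^ θ
      = Real.exp (Real.log (Real.Gamma x) + θ * Real.log (x - 1)) := by
    rw [Real.exp_add, Real.exp_log hGx, Real.rpow_def_of_pos hx1]
    ring_nf
  rw [h3, ← Real.exp_log hGxθ]
  exact Real.exp_le_exp.mpr h2


lemma gamma_step {θ x : ℝ} (hθ : 0 < θ) (hx : 2 + Real.exp 1 ≤ x) :
    Real.exp θ * Real.Gamma x ≤ Real.Gamma (x + θ) := by
  have he : (0:ℝ) < Real.exp 1 := Real.exp_pos 1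
  have hx2 : (2:ℝ) ≤ x := by linarith
  have h1 : Real.exp θ ≤ (x - 1) ^ θ := by
    calc Real.exp θ = (Real.exp 1) ^ θ := (Real.exp_one_rpow θ).symm
      _ ≤ (x - 1) ^ θ := Real.rpow_le_rpow he.le (by linarith) hθ.le
  calc Real.exp θ * Real.Gamma x ≤ (x - 1) ^ θ * Real.Gamma x := by
        have := Real.Gamma_pos_of_pos (show (0:ℝ) < x by linarith)
        nlinarith
    _ = Real.Gamma x * (x - 1) ^ θ := by ring
    _ ≤ Real.Gamma (x + θ) := gamma_ratio hθ hx2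


lemma gamma_seq_tendsto {θ σ : ℝ} (hθ : 0 < θ) (hσ : 0 < σ) :
    Tendsto (fun n : ℕ => Real.Gamma (θ * ((n:ℝ)+1) + σ)) atTop atTop := by
  obtain ⟨N, hN⟩ := exists_nat_gt ((2 + Real.exp 1) / θ)
  have hxN : ∀ n, N ≤ n → 2 + Real.exp 1 ≤ θ * ((n:ℝ)+1) + σ := by
    intro n hn
    have h1 : (N:ℝ) ≤ n := Nat.cast_le.mpr hn
    have h2 : (2 + Real.exp 1) < θ * N := by
      rw [div_lt_iff₀ hθ] at hN; linarith [hN]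
    nlinarith [hσ, hθ]
  have hstep : ∀ n, N ≤ n →
      Real.exp θ * Real.Gamma (θ * ((n:ℝ)+1) + σ) ≤ Real.Gamma (θ * ((n+1:ℕ):ℝ)+θ + σ) := by
    intro n hn
    have := gamma_step hθ (hxN n hn)
    push_cast
    rw [show θ * ((n:ℝ)+1) + θ + σ = (θ * ((n:ℝ)+1) + σ) + θ by ring]
    exact this
  have hGpos : ∀ n : ℕ, 0 < Real.Gamma (θ * ((n:ℝ)+1) + σ) := by
    intro n
    apply Real.Gamma_pos_of_pos
    positivity
  have hind : ∀ k : ℕ, Real.exp θ ^ k * Real.Gamma (θ * ((N:ℝ)+1) + σ)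
      ≤ Real.Gamma (θ * (((N+k:ℕ):ℝ)+1) + σ) := by
    intro k
    induction k with
    | zero => simp
    | succ k ih =>
      have h1 : Real.exp θ * Real.Gamma (θ * (((N+k:ℕ):ℝ)+1) + σ)
          ≤ Real.Gamma (θ * (((N+k+1:ℕ):ℝ)+1) + σ) := by
        have h2 := hstep (N+k) (Nat.le_add_right N k)
        push_cast at h2 ⊢
        convert h2 using 3
        ring
      calc Real.exp θ ^ (k+1) * Real.Gamma (θ * ((N:ℝ)+1) + σ)
          = Real.exp θ * (Real.exp θ ^ k * Real.Gamma (θ * ((N:ℝ)+1) + σ)) := by ring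
        _ ≤ Real.exp θ * Real.Gamma (θ * (((N+k:ℕ):ℝ)+1) + σ) := by
            have he := Real.exp_pos θ
            nlinarith [ih]
        _ ≤ Real.Gamma (θ * (((N+k+1:ℕ):ℝ)+1) + σ) := h1
  have h1exp : (1:ℝ) < Real.exp θ := by
    nlinarith [Real.add_one_le_exp θ]
  have hφ : Tendsto (fun k : ℕ => Real.exp θ ^ k * Real.Gamma (θ * ((N:ℝ)+1) + σ))
      atTop atTop :=
    (tendsto_pow_atTop_atTop_of_one_lt h1exp).atTop_mul_const (hGpos N)
  apply tendsto_atTop_mono' atTop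
    (show ∀ᶠ n in atTop, (fun k : ℕ => Real.exp θ ^ k * Real.Gamma (θ * ((N:ℝ)+1) + σ)) (n - N)
      ≤ Real.Gamma (θ * ((n:ℝ)+1) + σ) from ?_)
    (hφ.comp (tendsto_sub_atTop_nat N))
  filter_upwards [eventually_ge_atTop N] with n hn
  have h3 := hind (n - N)
  rwa [Nat.add_sub_cancel' hn] at h3


lemma gamma_seq_summable {θ σ ε : ℝ} (hθ : 0 < θ) (hσ : 0 < σ) (hε : 0 < ε) :
    Summable (fun n : ℕ => Real.Gamma (θ * ((n:ℝ)+1) + σ) ^ (-ε)) := by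
  have hGpos : ∀ n : ℕ, 0 < Real.Gamma (θ * ((n:ℝ)+1) + σ) := by
    intro n
    apply Real.Gamma_pos_of_pos
    positivity
  have hl : Real.exp (θ * (-ε)) < 1 := by
    rw [Real.exp_lt_one_iff]
    nlinarith
  apply summable_of_ratio_norm_eventually_le hl
  have hev : ∀ᶠ n : ℕ in atTop, 2 + Real.exp 1 ≤ θ * ((n:ℝ)+1) + σ := by
    obtain ⟨N, hN⟩ := exists_nat_gt ((2 + Real.exp 1) / θ)
    filter_upwards [eventually_ge_atTop N] with n hn
    have h1 : (N:ℝ) ≤ n := Nat.cast_le.mpr hn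
    rw [div_lt_iff₀ hθ] at hN
    nlinarith
  filter_upwards [hev] with n hn
  have hstep := gamma_step hθ hn
  have harg : θ * (((n+1:ℕ):ℝ)+1) + σ = (θ * ((n:ℝ)+1) + σ) + θ := by push_cast; ring
  have hpos1 : (0:ℝ) < Real.exp θ * Real.Gamma (θ * ((n:ℝ)+1) + σ) :=
    mul_pos (Real.exp_pos θ) (hGpos n)
  have h2 : Real.Gamma (θ * (((n+1:ℕ):ℝ)+1) + σ) ^ (-ε)
      ≤ (Real.exp θ * Real.Gamma (θ * ((n:ℝ)+1) + σ)) ^ (-ε) := by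
    rw [harg]
    exact Real.rpow_le_rpow_of_nonpos hpos1 hstep (by linarith)
  have h3 : (Real.exp θ * Real.Gamma (θ * ((n:ℝ)+1) + σ)) ^ (-ε)
      = Real.exp (θ * (-ε)) * Real.Gamma (θ * ((n:ℝ)+1) + σ) ^ (-ε) := by
    rw [Real.mul_rpow (Real.exp_pos θ).le (hGpos n).le,
      Real.rpow_def_of_pos (Real.exp_pos θ), Real.log_exp]
  rw [Real.norm_eq_abs, Real.norm_eq_abs,
    abs_of_pos (Real.rpow_pos_of_pos (hGpos (n+1)) _),
    abs_of_pos (Real.rpow_pos_of_pos (hGpos n) _)]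
  calc Real.Gamma (θ * (((n+1:ℕ):ℝ)+1) + σ) ^ (-ε)
      ≤ (Real.exp θ * Real.Gamma (θ * ((n:ℝ)+1) + σ)) ^ (-ε) := h2
    _ = Real.exp (θ * (-ε)) * Real.Gamma (θ * ((n:ℝ)+1) + σ) ^ (-ε) := h3


lemma summable_of_eventually_le {f g : ℕ → ℝ} (hf : ∀ n, 0 ≤ f n)
    (h : ∀ᶠ n in atTop, f n ≤ g n) (hg : Summable g) : Summable f := by
  obtain ⟨N, hN⟩ := eventually_atTop.mp h
  rw [← summable_nat_add_iff N]
  exact ((summable_nat_add_iff N).mpr hg).of_nonneg_of_le (fun n => hf _)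
    (fun n => hN (n+N) (Nat.le_add_left N n))

lemma betaPQ_nonneg (p q x y : ℝ) : 0 ≤ betaPQ p q x y := by
  apply setIntegral_nonneg measurableSet_Ioo
  intro t ht
  have h1 : (0:ℝ) ≤ t := ht.1.le
  have h2 : (0:ℝ) ≤ 1 - t := by linarith [ht.2]
  positivity


lemma integrableOn_oneSub_rpow {y : ℝ} (hy : 0 < y) :
    IntegrableOn (fun t : ℝ => (1 - t) ^ (y - 1)) (Ioo (0:ℝ) 1) := by
  have h1 : IntervalIntegrable (fun t : ℝ => t ^ (y-1)) volume 0 1 :=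
    intervalIntegral.intervalIntegrable_rpow' (by linarith)
  have h2 := h1.comp_sub_left 1
  simp only [sub_zero, sub_self] at h2
  have h3 : IntervalIntegrable (fun t : ℝ => (1 - t) ^ (y-1)) volume 0 1 := h2.symm
  rw [intervalIntegrable_iff_integrableOn_Ioo_of_le (by norm_num)] at h3
  exact h3


lemma betaPQ_le {p q x y : ℝ} (hp : 0 ≤ p) (hq : 0 ≤ q) (hx : 1 ≤ x) (hy : 0 < y) :
    betaPQ p q x y ≤ ∫ t in Ioo (0:ℝ) 1, (1 - t) ^ (y - 1) := by
  apply integral_mono_of_nonneg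
  · filter_upwards [ae_restrict_mem measurableSet_Ioo] with t ht
    have h1 : (0:ℝ) ≤ t := ht.1.le
    have h2 : (0:ℝ) ≤ 1 - t := by linarith [ht.2]
    positivity
  · exact integrableOn_oneSub_rpow hy
  · filter_upwards [ae_restrict_mem measurableSet_Ioo] with t ht
    have h1 : (0:ℝ) < t := ht.1
    have h2 : (0:ℝ) < 1 - t := by linarith [ht.2]
    have ha : t ^ (x - 1) ≤ 1 := Real.rpow_le_one h1.le ht.2.le (by linarith)
    have hb : Real.exp (-p / t - q / (1 - t)) ≤ 1 := by
      rw [Real.exp_le_one_iff]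
      have : 0 ≤ p / t := by positivity
      have : 0 ≤ q / (1 - t) := by positivity
      have hneg : -p / t = -(p / t) := by ring
      rw [hneg]
      linarith
    have hc : (0:ℝ) ≤ (1 - t) ^ (y - 1) := Real.rpow_nonneg h2.le _
    calc t ^ (x - 1) * (1 - t) ^ (y - 1) * Real.exp (-p / t - q / (1 - t))
        ≤ 1 * (1 - t) ^ (y - 1) * 1 := by
          apply mul_le_mul _ hb (Real.exp_nonneg _) (by nlinarith)
          exact mul_le_mul ha le_rfl hc (by linarith)
      _ = (1 - t) ^ (y - 1) := by ring


lemma core_swap {μ r : ℝ} (g v : ℕ → ℝ) (hμ : 0 < μ) (hr : 0 < r)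
    (hg : ∀ n, r ^ 2 < g n)
    (hsum : Summable (fun n => |v n| * (1 - r^2/(g n)) ^ (-μ))) :
    (∀ n, HasSum (fun m : ℕ => poch μ m / (Nat.factorial m : ℝ) * (-r^2)^m * (v n / g n ^ m))
        (v n * (1 + r^2/(g n)) ^ (-μ)))
    ∧ ∑' (n : ℕ) (m : ℕ), poch μ m / (Nat.factorial m : ℝ) * (-r^2)^m * (v n / g n ^ m)
      = ∑' (m : ℕ) (n : ℕ), poch μ m / (Nat.factorial m : ℝ) * (-r^2)^m * (v n / g n ^ m) := by
  have hg0 : ∀ n, 0 < g n := fun n => lt_trans (by positivity) (hg n)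
  have hu0 : ∀ n, 0 < r^2 / g n := fun n => div_pos (by positivity) (hg0 n)
  have hu1 : ∀ n, r^2 / g n < 1 := fun n => (div_lt_one (hg0 n)).mpr (hg n)
  have hcpos : ∀ m : ℕ, 0 < poch μ m / (Nat.factorial m : ℝ) := fun m =>
    div_pos (poch_pos hμ m) (by exact_mod_cast Nat.cast_pos.mpr (Nat.factorial_pos m))
  have hterm : ∀ n m, v n * (poch μ m / (Nat.factorial m : ℝ) * (-(r^2 / g n))^m)
      = poch μ m / (Nat.factorial m : ℝ) * (-r^2)^m * (v n / g n ^ m) := by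
    intro n m
    have h1 : -(r^2 / g n) = (-r^2) / g n := by ring
    rw [h1, div_pow]
    ring
  have hrow : ∀ n, HasSum
      (fun m : ℕ => poch μ m / (Nat.factorial m : ℝ) * (-r^2)^m * (v n / g n ^ m))
      (v n * (1 + r^2/(g n)) ^ (-μ)) := by
    intro n
    have hb := binomial_hasSum (x := -(r^2 / g n)) hμ
      (by rw [abs_neg, abs_of_pos (hu0 n)]; exact hu1 n)
    rw [show (1 : ℝ) - -(r^2 / g n) = 1 + r^2 / g n by ring] at hb
    have hb2 := hb.mul_left (v n)
    rwa [show (fun m : ℕ => v n * (poch μ m / (Nat.factorial m : ℝ) * (-(r^2 / g n))^m))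
      = fun m : ℕ => poch μ m / (Nat.factorial m : ℝ) * (-r^2)^m * (v n / g n ^ m)
      from funext (hterm n)] at hb2
  refine ⟨hrow, ?_⟩
  have habsterm : ∀ n m, |poch μ m / (Nat.factorial m : ℝ) * (-r^2)^m * (v n / g n ^ m)|
      = |v n| * (poch μ m / (Nat.factorial m : ℝ) * (r^2 / g n)^m) := by
    intro n m
    have e1 : |poch μ m / (Nat.factorial m : ℝ)| = poch μ m / (Nat.factorial m : ℝ) :=
      abs_of_pos (hcpos m)
    have e2 : |(-r^2 : ℝ)^m| = (r^2)^m := by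
      rw [abs_pow, abs_neg, abs_of_pos (show (0:ℝ) < r^2 by positivity)]
    have e3 : |v n / g n ^ m| = |v n| / g n ^ m := by
      rw [abs_div, abs_pow, abs_of_pos (hg0 n)]
    rw [abs_mul, abs_mul, e1, e2, e3, div_pow]
    ring
  have habsrow : ∀ n, HasSum
      (fun m : ℕ => |poch μ m / (Nat.factorial m : ℝ) * (-r^2)^m * (v n / g n ^ m)|)
      (|v n| * (1 - r^2/(g n)) ^ (-μ)) := by
    intro n
    have hb := binomial_hasSum (x := r^2 / g n) hμ
      (by rw [abs_of_pos (hu0 n)]; exact hu1 n)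
    have hb2 := hb.mul_left |v n|
    rwa [show (fun m : ℕ => |v n| * (poch μ m / (Nat.factorial m : ℝ) * (r^2 / g n)^m))
      = fun m : ℕ => |poch μ m / (Nat.factorial m : ℝ) * (-r^2)^m * (v n / g n ^ m)|
      from funext (fun m => (habsterm n m).symm)] at hb2
  have habs : Summable (fun p : ℕ × ℕ =>
      |poch μ p.2 / (Nat.factorial p.2 : ℝ) * (-r^2)^p.2 * (v p.1 / g p.1 ^ p.2)|) := by
    rw [summable_prod_of_nonneg (fun p => abs_nonneg _)]
    constructor
    · exact fun n => (habsrow n).summable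
    · apply Summable.congr hsum
      intro n
      exact ((habsrow n).tsum_eq).symm
  have hunc : Summable (Function.uncurry (fun n m : ℕ =>
      poch μ m / (Nat.factorial m : ℝ) * (-r^2)^m * (v n / g n ^ m))) :=
    Summable.of_abs habs
  exact (Summable.tsum_comm' hunc (fun n => (hrow n).summable)
    (fun m => hunc.prod_symm.prod_factor m)).symm


end AuxLemmas

set_option maxHeartbeats 1000000 in
theorem statement13 (r α β γ μ τ ω θ σ p q z : ℝ)
    (hr : 0 < r) (hα : 0 < α) (hβ : 0 < β) (hγ : 0 < γ) (hμ : 0 < μ)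
    (hτ : 0 < τ) (hω : 0 < ω) (hθ : 0 < θ) (hσ : 0 < σ) (hτω : τ < ω)
    (hexp : 0 < γ * (μ * α - β)) (hp : 0 ≤ p) (hq : 0 ≤ q)
    (hz0 : 0 < |z|) (hz : |z| ≤ 1)
    (hra : ∀ k : ℕ, 1 ≤ k → r ^ 2 < Real.Gamma (θ * (k : ℝ) + σ) ^ (γ * α)) :
    mathieuPQ μ 1 τ ω α β r p q z (fun k => Real.Gamma (θ * (k : ℝ) + σ) ^ γ) =
      2 * z * τ / ω *
        ∑' m : ℕ, poch μ m / (Nat.factorial m : ℝ) * (-r ^ 2) ^ m *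
          mlPQ (γ * ((μ + (m : ℝ)) * α - β)) θ (σ + θ) 1 (τ + 1) (ω + 1) p q z := by
  have hωτ : 0 < ω - τ := by linarith
  have hGpos : ∀ n : ℕ, 0 < Real.Gamma (θ * ((n:ℝ) + 1) + σ) := fun n =>
    Real.Gamma_pos_of_pos (by positivity)
  have hB0pos : 0 < betaE τ (ω - τ) := by
    rw [betaE, show τ + (ω - τ) = ω from by ring]
    exact div_pos (mul_pos (Real.Gamma_pos_of_pos hτ) (Real.Gamma_pos_of_pos hωτ))
      (Real.Gamma_pos_of_pos hω)
  have hgr : ∀ n : ℕ, r ^ 2 < Real.Gamma (θ * ((n:ℝ) + 1) + σ) ^ (γ * α) := by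
    intro n
    have h := hra (n+1) (Nat.le_add_left 1 n)
    push_cast at h
    exact h
  have hBq0 : ∀ n : ℕ, 0 ≤ betaPQ p q (τ + ((n:ℝ) + 1)) (ω - τ) := fun n =>
    betaPQ_nonneg _ _ _ _
  have hCb0 : 0 ≤ ∫ t in Ioo (0:ℝ) 1, (1 - t) ^ (ω - τ - 1) := by
    apply setIntegral_nonneg measurableSet_Ioo
    intro t ht
    exact Real.rpow_nonneg (by linarith [ht.2]) _
  have hBqle : ∀ n : ℕ, betaPQ p q (τ + ((n:ℝ) + 1)) (ω - τ)
      ≤ ∫ t in Ioo (0:ℝ) 1, (1 - t) ^ (ω - τ - 1) := by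
    intro n
    apply betaPQ_le hp hq _ hωτ
    have h0 : (0:ℝ) ≤ (n:ℝ) := Nat.cast_nonneg n
    linarith
  have hvsum : Summable (fun n : ℕ => |2 * betaPQ p q (τ + ((n:ℝ) + 1)) (ω - τ) * z ^ (n + 1) / (betaE τ (ω - τ) * Real.Gamma (θ * ((n:ℝ) + 1) + σ) ^ (γ * (μ * α - β)))| * (1 - r ^ 2 / (Real.Gamma (θ * ((n:ℝ) + 1) + σ) ^ (γ * α))) ^ (-μ)) := by
    apply summable_of_eventually_le
      (fun n => mul_nonneg (abs_nonneg _) (Real.rpow_nonneg (by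
        have h1 := hgr n
        have h2 : r ^ 2 / Real.Gamma (θ * ((n:ℝ) + 1) + σ) ^ (γ * α) < 1 :=
          (div_lt_one (lt_trans (by positivity) h1)).mpr h1
        linarith) _))
      ?_ ((gamma_seq_summable hθ hσ hexp).mul_left
        (2 * (∫ t in Ioo (0:ℝ) 1, (1 - t) ^ (ω - τ - 1)) * ((1:ℝ)/2) ^ (-μ) / betaE τ (ω - τ)))
    have hT : Filter.Tendsto (fun n : ℕ => Real.Gamma (θ * ((n:ℝ) + 1) + σ) ^ (γ * α)) atTop atTop :=
      (tendsto_rpow_atTop (by positivity)).comp (gamma_seq_tendsto hθ hσ)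
    filter_upwards [hT.eventually_ge_atTop (2 * r ^ 2)] with n hn
    have hA : (0:ℝ) < (Real.Gamma (θ * ((n:ℝ) + 1) + σ)) := hGpos n
    have hga : (0:ℝ) < Real.Gamma (θ * ((n:ℝ) + 1) + σ) ^ (γ * α) := Real.rpow_pos_of_pos hA _
    have hea : (0:ℝ) < (Real.Gamma (θ * ((n:ℝ) + 1) + σ)) ^ (γ * (μ * α - β)) := Real.rpow_pos_of_pos hA _
    have hu2 : r ^ 2 / Real.Gamma (θ * ((n:ℝ) + 1) + σ) ^ (γ * α) ≤ 1/2 := by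
      rw [div_le_iff₀ hga]
      nlinarith [hn]
    have h12 : (1:ℝ)/2 ≤ 1 - r ^ 2 / Real.Gamma (θ * ((n:ℝ) + 1) + σ) ^ (γ * α) := by linarith
    have h2 : (1 - r ^ 2 / Real.Gamma (θ * ((n:ℝ) + 1) + σ) ^ (γ * α)) ^ (-μ) ≤ ((1:ℝ)/2) ^ (-μ) :=
      Real.rpow_le_rpow_of_nonpos (by norm_num) h12 (by linarith)
    have h1 : |2 * betaPQ p q (τ + ((n:ℝ) + 1)) (ω - τ) * z ^ (n + 1) / (betaE τ (ω - τ) * Real.Gamma (θ * ((n:ℝ) + 1) + σ) ^ (γ * (μ * α - β)))| ≤ 2 * (∫ t in Ioo (0:ℝ) 1, (1 - t) ^ (ω - τ - 1)) /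
        (betaE τ (ω - τ) * (Real.Gamma (θ * ((n:ℝ) + 1) + σ)) ^ (γ * (μ * α - β))) := by
      rw [abs_div, abs_of_pos (mul_pos hB0pos hea), abs_mul, abs_mul, abs_pow,
        abs_of_nonneg (by norm_num : (0:ℝ) ≤ 2), abs_of_nonneg (hBq0 n)]
      have hD : (0:ℝ) < betaE τ (ω - τ) * Real.Gamma (θ * ((n:ℝ) + 1) + σ) ^ (γ * (μ * α - β)) :=
        mul_pos hB0pos hea
      rw [div_le_div_iff₀ hD hD]
      have hnum : 2 * betaPQ p q (τ + ((n:ℝ) + 1)) (ω - τ) * |z| ^ (n + 1)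
          ≤ 2 * ∫ t in Ioo (0:ℝ) 1, (1 - t) ^ (ω - τ - 1) := by
        calc 2 * betaPQ p q (τ + ((n:ℝ) + 1)) (ω - τ) * |z| ^ (n + 1)
            ≤ 2 * (∫ t in Ioo (0:ℝ) 1, (1 - t) ^ (ω - τ - 1)) * 1 := by
              apply mul_le_mul (mul_le_mul_of_nonneg_left (hBqle n) (by norm_num))
                (pow_le_one₀ (abs_nonneg z) hz) (by positivity)
                (by positivity)
          _ = 2 * ∫ t in Ioo (0:ℝ) 1, (1 - t) ^ (ω - τ - 1) := by ring
      exact mul_le_mul_of_nonneg_right hnum hD.le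
    calc |2 * betaPQ p q (τ + ((n:ℝ) + 1)) (ω - τ) * z ^ (n + 1) / (betaE τ (ω - τ) * Real.Gamma (θ * ((n:ℝ) + 1) + σ) ^ (γ * (μ * α - β)))| * (1 - r ^ 2 / (Real.Gamma (θ * ((n:ℝ) + 1) + σ) ^ (γ * α))) ^ (-μ)
        ≤ (2 * (∫ t in Ioo (0:ℝ) 1, (1 - t) ^ (ω - τ - 1)) /
            (betaE τ (ω - τ) * Real.Gamma (θ * ((n:ℝ) + 1) + σ) ^ (γ * (μ * α - β)))) *
            (((1:ℝ)/2) ^ (-μ)) := by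
          exact mul_le_mul h1 h2 (Real.rpow_nonneg (by linarith) _) (by positivity)
      _ = 2 * (∫ t in Ioo (0:ℝ) 1, (1 - t) ^ (ω - τ - 1)) * ((1:ℝ)/2) ^ (-μ) / betaE τ (ω - τ)
            * Real.Gamma (θ * ((n:ℝ) + 1) + σ) ^ (-(γ * (μ * α - β))) := by
          rw [Real.rpow_neg (hGpos n).le]
          field_simp
  obtain ⟨hrow, hswap⟩ := core_swap
    (fun n : ℕ => Real.Gamma (θ * ((n:ℝ) + 1) + σ) ^ (γ * α)) (fun n : ℕ => 2 * betaPQ p q (τ + ((n:ℝ) + 1)) (ω - τ) * z ^ (n + 1) / (betaE τ (ω - τ) * Real.Gamma (θ * ((n:ℝ) + 1) + σ) ^ (γ * (μ * α - β)))) hμ hr hgr hvsum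
  have hLHS : mathieuPQ μ 1 τ ω α β r p q z (fun k => Real.Gamma (θ * (k:ℝ) + σ) ^ γ)
      = ∑' (n : ℕ), (2 * betaPQ p q (τ + ((n:ℝ) + 1)) (ω - τ) * z ^ (n + 1) / (betaE τ (ω - τ) * Real.Gamma (θ * ((n:ℝ) + 1) + σ) ^ (γ * (μ * α - β)))) * (1 + r ^ 2 / (Real.Gamma (θ * ((n:ℝ) + 1) + σ) ^ (γ * α))) ^ (-μ) := by
    unfold mathieuPQ
    apply tsum_congr
    intro n
    beta_reduce
    push_cast
    rw [poch_one]
    have hA : (0:ℝ) < Real.Gamma (θ * ((n:ℝ) + 1) + σ) := hGpos n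
    have e1 : ((Real.Gamma (θ * ((n:ℝ) + 1) + σ)) ^ γ) ^ β = (Real.Gamma (θ * ((n:ℝ) + 1) + σ)) ^ (γ * β) := (Real.rpow_mul hA.le γ β).symm
    have e2 : ((Real.Gamma (θ * ((n:ℝ) + 1) + σ)) ^ γ) ^ α = (Real.Gamma (θ * ((n:ℝ) + 1) + σ)) ^ (γ * α) := (Real.rpow_mul hA.le γ α).symm
    have hga : (0:ℝ) < Real.Gamma (θ * ((n:ℝ) + 1) + σ) ^ (γ * α) := Real.rpow_pos_of_pos hA _
    have hu01 : (0:ℝ) < 1 + r ^ 2 / (Real.Gamma (θ * ((n:ℝ) + 1) + σ) ^ (γ * α)) := by positivity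
    have e3 : (Real.Gamma (θ * ((n:ℝ) + 1) + σ) ^ (γ * α)) + r ^ 2 = (Real.Gamma (θ * ((n:ℝ) + 1) + σ) ^ (γ * α)) * (1 + r ^ 2 / (Real.Gamma (θ * ((n:ℝ) + 1) + σ) ^ (γ * α))) := by field_simp
    have e4 : ((Real.Gamma (θ * ((n:ℝ) + 1) + σ) ^ (γ * α)) * (1 + r ^ 2 / (Real.Gamma (θ * ((n:ℝ) + 1) + σ) ^ (γ * α)))) ^ μ
        = (Real.Gamma (θ * ((n:ℝ) + 1) + σ)) ^ (γ * α * μ) * (1 + r ^ 2 / (Real.Gamma (θ * ((n:ℝ) + 1) + σ) ^ (γ * α))) ^ μ := by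
      rw [Real.mul_rpow hga.le hu01.le, ← Real.rpow_mul hA.le]
    have e5 : (1 + r ^ 2 / (Real.Gamma (θ * ((n:ℝ) + 1) + σ) ^ (γ * α))) ^ (-μ) = ((1 + r ^ 2 / (Real.Gamma (θ * ((n:ℝ) + 1) + σ) ^ (γ * α))) ^ μ)⁻¹ := by
      rw [Real.rpow_neg hu01.le]
    have e6 : (Real.Gamma (θ * ((n:ℝ) + 1) + σ)) ^ (γ * (μ * α - β)) * (Real.Gamma (θ * ((n:ℝ) + 1) + σ)) ^ (γ * β) = (Real.Gamma (θ * ((n:ℝ) + 1) + σ)) ^ (γ * α * μ) := by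
      rw [← Real.rpow_add hA]
      congr 1
      ring
    have hfac : ((Nat.factorial (n+1) : ℕ):ℝ) ≠ 0 := by
      exact_mod_cast (Nat.factorial_pos (n+1)).ne'
    have hmupow : (0:ℝ) < (1 + r ^ 2 / (Real.Gamma (θ * ((n:ℝ) + 1) + σ) ^ (γ * α))) ^ μ := Real.rpow_pos_of_pos hu01 μ
    rw [e1, e2, e3, e4, e5, ← e6]
    field_simp
  rw [hLHS, tsum_congr (fun n : ℕ => ((hrow n).tsum_eq).symm), hswap, ← tsum_mul_left]
  apply tsum_congr
  intro m
  unfold mlPQ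
  rw [← tsum_mul_left, ← tsum_mul_left]
  apply tsum_congr
  intro n
  rw [poch_one]
  have hA : (0:ℝ) < Real.Gamma (θ * ((n:ℝ) + 1) + σ) := hGpos n
  have f1 : ω + 1 - (τ + 1) = ω - τ := by ring
  have f2 : τ + 1 + (n:ℝ) = τ + ((n:ℝ) + 1) := by ring
  have f3 : θ * (n:ℝ) + (σ + θ) = θ * ((n:ℝ) + 1) + σ := by ring
  rw [f1, f2, f3]
  have f4 : betaE (τ + 1) (ω - τ) = τ / ω * betaE τ (ω - τ) := by
    rw [betaE, betaE, show τ + 1 + (ω - τ) = ω + 1 from by ring,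
      show τ + (ω - τ) = ω from by ring,
      Real.Gamma_add_one hτ.ne', Real.Gamma_add_one hω.ne']
    field_simp
  rw [f4]
  have e2m : ((Real.Gamma (θ * ((n:ℝ) + 1) + σ) ^ (γ * α))) ^ m = (Real.Gamma (θ * ((n:ℝ) + 1) + σ)) ^ (γ * α * (m:ℝ)) := by
    rw [← Real.rpow_natCast ((Real.Gamma (θ * ((n:ℝ) + 1) + σ) ^ (γ * α))) m, ← Real.rpow_mul hA.le]
  have e6m : (Real.Gamma (θ * ((n:ℝ) + 1) + σ)) ^ (γ * ((μ + (m:ℝ)) * α - β))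
      = (Real.Gamma (θ * ((n:ℝ) + 1) + σ)) ^ (γ * (μ * α - β)) * (Real.Gamma (θ * ((n:ℝ) + 1) + σ)) ^ (γ * α * (m:ℝ)) := by
    rw [← Real.rpow_add hA]
    congr 1
    ring
  have hfac : ((Nat.factorial n : ℕ):ℝ) ≠ 0 := by
    exact_mod_cast (Nat.factorial_pos n).ne'
  have hp1 : (0:ℝ) < (Real.Gamma (θ * ((n:ℝ) + 1) + σ)) ^ (γ * (μ * α - β)) := Real.rpow_pos_of_pos hA _
  have hp2 : (0:ℝ) < (Real.Gamma (θ * ((n:ℝ) + 1) + σ)) ^ (γ * α * (m:ℝ)) := Real.rpow_pos_of_pos hA _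
  rw [e2m, e6m]
  field_simp
  ring
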